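/- Let G be a connected graph, let (T, (B_t)_{t∈V(T)}) be a tree decomposition of G, and let A ⊆ V(G). Then there exists a node t ∈ V(T) such that every connected component of G[A \ B_t] has at most |A|/2 vertices. -/

import Mathlib

/-- A tree decomposition of a graph `G`: a tree `T` on node type `ι` together with bags
`bag t ⊆ V` such that every vertex appears in a nonempty connected (in `T`) set of bags,
and every edge of `G` is contained in some bag. -/
structure TreeDecomp {V : Type*} (G : SimpleGraph V) (ι : Type*) where
  T : SimpleGraph ι
  isTree : T.IsTree
  bag : ι → Set V
  bag_nonempty : ∀ v : V, ∃ t, v ∈ bag t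
  bag_connected : ∀ v : V, (T.induce {t | v ∈ bag t}).Connected
  bag_edge : ∀ u v : V, G.Adj u v → ∃ t, u ∈ bag t ∧ v ∈ bag t

open SimpleGraph

/-- From connectivity of an induced subgraph, extract a walk in the ambient graph whose
support stays in the set. -/
lemma TD.walk_of_induce_connected {ι : Type*} {T : SimpleGraph ι} {S : Set ι}
    (h : (T.induce S).Connected) {s r : ι} (hs : s ∈ S) (hr : r ∈ S) :
    ∃ p : T.Walk s r, ∀ x ∈ p.support, x ∈ S := by
  obtain ⟨q⟩ := h ⟨s, hs⟩ ⟨r, hr⟩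
  refine ⟨q.map (SimpleGraph.Embedding.induce S).toHom, ?_⟩
  intro x hx
  have hx : x ∈ List.map (SimpleGraph.Embedding.induce (G := T) S).toHom q.support := by
    rw [← SimpleGraph.Walk.support_map]; exact hx
  obtain ⟨y, hy, rfl⟩ := List.mem_map.mp hx
  exact y.2

/-- Given a walk to `t` starting at `a ≠ t`, there is a prefix walk avoiding `t` that ends
at a neighbor of `t`, with support inside the original support. -/
lemma TD.firstHit {ι : Type*} {T : SimpleGraph ι} {a t : ι} (p : T.Walk a t) :
    a ≠ t → ∃ (u : ι) (q : T.Walk a u), T.Adj u t ∧ t ∉ q.support ∧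
      ∀ x ∈ q.support, x ∈ p.support := by
  induction p with
  | nil => exact fun h => absurd rfl h
  | @cons a c t h q ih =>
    intro ha
    by_cases hc : c = t
    · subst hc
      refine ⟨a, SimpleGraph.Walk.nil, h, ?_, ?_⟩
      · simp [Ne.symm ha]
      · intro x hx
        simp only [SimpleGraph.Walk.support_nil, List.mem_singleton] at hx
        subst hx
        exact SimpleGraph.Walk.start_mem_support _
    · obtain ⟨u, q', hadj, hnot, hsub⟩ := ih hc
      refine ⟨u, SimpleGraph.Walk.cons h q', hadj, ?_, ?_⟩
      · simp only [SimpleGraph.Walk.support_cons, List.mem_cons]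
        rintro (rfl | hmem)
        · exact ha rfl
        · exact hnot hmem
      · intro x hx
        simp only [SimpleGraph.Walk.support_cons, List.mem_cons] at hx ⊢
        rcases hx with rfl | hx
        · exact Or.inl rfl
        · exact Or.inr (hsub x hx)

/-- In a tree, two neighbors of `t` joined by a walk avoiding `t` are equal. -/
lemma TD.tree_nbr_unique {ι : Type*} {T : SimpleGraph ι} (hT : T.IsTree) {t u u' : ι}
    (hu : T.Adj t u) (hu' : T.Adj t u') (p : T.Walk u u') (hp : t ∉ p.support) : u = u' := by
  classical
  by_contra hne
  have hq : t ∉ p.bypass.support := fun h => hp (p.support_bypass_subset h)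
  set P1 : T.Walk u u' := SimpleGraph.Walk.cons hu.symm (SimpleGraph.Walk.cons hu' SimpleGraph.Walk.nil) with hP1def
  have hP1 : P1.IsPath := by
    simp [hP1def, SimpleGraph.Walk.isPath_def, SimpleGraph.Walk.support_cons,
      SimpleGraph.Walk.support_nil, hu.ne', hu'.ne, hne]
  have heq : (⟨P1, hP1⟩ : T.Path u u') = ⟨p.bypass, p.bypass_isPath⟩ :=
    hT.IsAcyclic.path_unique _ _
  have heq' : P1 = p.bypass := congrArg Subtype.val heq
  apply hq
  rw [← heq']
  simp [hP1def, SimpleGraph.Walk.support_cons]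

section Main

variable {V ι : Type*} {G : SimpleGraph V} (td : TreeDecomp G ι) (A : Set V)
  (Cb : ∀ t : ι, (G.induce (A \ td.bag t)).ConnectedComponent)

/-- The vertex set of the chosen component at `t`. -/
def TD.U (t : ι) : Set V := Subtype.val '' (Cb t).supp

/-- The set of tree nodes whose bag meets the chosen component at `t`. -/
def TD.W (t : ι) : Set ι := {s | ∃ w ∈ TD.U td A Cb t, w ∈ td.bag s}

/-- The set of tree nodes reachable from `TD.W t` by walks avoiding `t`. -/
def TD.Side (t : ι) : Set ι :=
  {s | ∃ r ∈ TD.W td A Cb t, ∃ p : td.T.Walk s r, t ∉ p.support}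

lemma TD.U_sub (t : ι) : TD.U td A Cb t ⊆ A \ td.bag t := by
  rintro v ⟨v', _, rfl⟩
  exact v'.2

lemma TD.U_adj {t : ι} {v w : V} (hv : v ∈ TD.U td A Cb t) (hw : w ∈ A \ td.bag t)
    (h : G.Adj v w) : w ∈ TD.U td A Cb t := by
  obtain ⟨v', hv', rfl⟩ := hv
  refine ⟨⟨w, hw⟩, ?_, rfl⟩
  rw [SimpleGraph.ConnectedComponent.mem_supp_iff] at hv' ⊢
  rw [← hv']
  exact SimpleGraph.ConnectedComponent.sound (SimpleGraph.Adj.reachable (by exact h.symm))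

lemma TD.L2aux {t : ι} {a b : ↥(A \ td.bag t)}
    (p : (G.induce (A \ td.bag t)).Walk a b) :
    (a : V) ∈ TD.U td A Cb t → ∀ s r : ι, (a : V) ∈ td.bag s → (b : V) ∈ td.bag r →
      ∃ q : td.T.Walk s r, ∀ x ∈ q.support, ∃ w ∈ TD.U td A Cb t, w ∈ td.bag x := by
  induction p with
  | @nil a =>
    intro ha s r hs hr
    obtain ⟨q, hq⟩ := TD.walk_of_induce_connected (td.bag_connected (↑a))
      (show s ∈ {x | (a : V) ∈ td.bag x} from hs) hr
    exact ⟨q, fun x hx => ⟨↑a, ha, hq x hx⟩⟩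
  | @cons a c b h q ih =>
    intro ha s r hs hr
    have hGadj : G.Adj (a : V) (c : V) := h
    have hc : (c : V) ∈ TD.U td A Cb t := TD.U_adj td A Cb ha c.2 hGadj
    obtain ⟨x, hax, hcx⟩ := td.bag_edge (↑a) (↑c) hGadj
    obtain ⟨q1, hq1⟩ := TD.walk_of_induce_connected (td.bag_connected (↑a))
      (show s ∈ {y | (a : V) ∈ td.bag y} from hs) hax
    obtain ⟨q2, hq2⟩ := ih hc x r hcx hr
    refine ⟨q1.append q2, ?_⟩
    intro y hy
    rcases (SimpleGraph.Walk.mem_support_append_iff _ _).mp hy with hy1 | hy2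
    · exact ⟨↑a, ha, hq1 y hy1⟩
    · exact hq2 y hy2

/-- Any two bags meeting the chosen component at `t` are joined by a walk whose support
consists of nodes whose bags meet the component. -/
lemma TD.L2 {t : ι} {u v : V} {s r : ι} (hu : u ∈ TD.U td A Cb t) (hv : v ∈ TD.U td A Cb t)
    (hus : u ∈ td.bag s) (hvr : v ∈ td.bag r) :
    ∃ q : td.T.Walk s r, ∀ x ∈ q.support, ∃ w ∈ TD.U td A Cb t, w ∈ td.bag x := by
  obtain ⟨u', hu', rfl⟩ := hu
  obtain ⟨v', hv', rfl⟩ := hv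
  rw [SimpleGraph.ConnectedComponent.mem_supp_iff] at hu' hv'
  have hreach : (G.induce (A \ td.bag t)).Reachable u' v' :=
    SimpleGraph.ConnectedComponent.exact (hu'.trans hv'.symm)
  obtain ⟨p⟩ := hreach
  exact TD.L2aux td A Cb p ⟨u', by rw [SimpleGraph.ConnectedComponent.mem_supp_iff]; exact hu', rfl⟩ s r hus hvr

lemma TD.W_not_t {t : ι} {r : ι} (hr : r ∈ TD.W td A Cb t) : r ≠ t := by
  obtain ⟨w, hw, hwr⟩ := hr
  rintro rfl
  exact (TD.U_sub td A Cb _ hw).2 hwr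

lemma TD.W_sub_Side (t : ι) : TD.W td A Cb t ⊆ TD.Side td A Cb t := by
  intro r hr
  refine ⟨r, hr, SimpleGraph.Walk.nil, ?_⟩
  simp [Ne.symm (TD.W_not_t td A Cb hr)]

lemma TD.side_ne {t x : ι} (hx : x ∈ TD.Side td A Cb t) : x ≠ t := by
  obtain ⟨r, _, p, hp⟩ := hx
  rintro rfl
  exact hp p.start_mem_support

lemma TD.side_closed {t x y : ι} (hx : x ∈ TD.Side td A Cb t) (p : td.T.Walk y x)
    (hp : t ∉ p.support) : y ∈ TD.Side td A Cb t := by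
  obtain ⟨r, hr, q, hq⟩ := hx
  refine ⟨r, hr, p.append q, ?_⟩
  rw [SimpleGraph.Walk.mem_support_append_iff]
  rintro (h | h)
  · exact hp h
  · exact hq h

/-- Two neighbors of `t` that are both on the side of the chosen component are equal. -/
lemma TD.side_unique_nbr {t u u' : ι} (hu : td.T.Adj t u) (hu' : td.T.Adj t u')
    (hsu : u ∈ TD.Side td A Cb t) (hsu' : u' ∈ TD.Side td A Cb t) : u = u' := by
  obtain ⟨r, hr, p, hp⟩ := hsu
  obtain ⟨r', hr', p', hp'⟩ := hsu'
  obtain ⟨w, hw, hwr⟩ := hr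
  obtain ⟨w', hw', hwr'⟩ := hr'
  obtain ⟨q, hq⟩ := TD.L2 td A Cb hw hw' hwr hwr'
  have hqt : t ∉ q.support := by
    intro ht
    obtain ⟨z, hz, hzt⟩ := hq t ht
    exact (TD.U_sub td A Cb t hz).2 hzt
  refine TD.tree_nbr_unique td.isTree hu hu' ((p.append q).append p'.reverse) ?_
  rw [SimpleGraph.Walk.mem_support_append_iff, SimpleGraph.Walk.mem_support_append_iff,
    SimpleGraph.Walk.support_reverse]
  rintro ((h | h) | h)
  · exact hp h
  · exact hqt h
  · exact hp' (List.mem_reverse.mp h)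

lemma TD.exists_nbr (t : ι) :
    ∃ t', td.T.Adj t t' ∧ t' ∈ TD.Side td A Cb t := by
  obtain ⟨v', hv'⟩ := (Cb t).exists_rep
  have hv'U : (v' : V) ∈ TD.U td A Cb t :=
    ⟨v', by rw [SimpleGraph.ConnectedComponent.mem_supp_iff]; exact hv', rfl⟩
  obtain ⟨r, hvr⟩ := td.bag_nonempty (↑v')
  have hrW : r ∈ TD.W td A Cb t := ⟨↑v', hv'U, hvr⟩
  obtain ⟨p⟩ := td.isTree.isConnected r t
  obtain ⟨u, q, hadj, hnot, _⟩ := TD.firstHit p (TD.W_not_t td A Cb hrW)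
  refine ⟨u, hadj.symm, r, hrW, q.reverse, ?_⟩
  rw [SimpleGraph.Walk.support_reverse]
  exact fun h => hnot (List.mem_reverse.mp h)

/-- Key separation fact: a vertex lying in the bag of `t` and in a bag on the component's
side must also lie in the bag of the neighbor `t'` of `t` on that side. -/
lemma TD.M1 {t t' : ι} (hadj : td.T.Adj t t') (hside : t' ∈ TD.Side td A Cb t)
    {v : V} {x : ι} (hvt : v ∈ td.bag t) (hx : x ∈ TD.Side td A Cb t)
    (hvx : v ∈ td.bag x) : v ∈ td.bag t' := by
  obtain ⟨p, hp⟩ := TD.walk_of_induce_connected (td.bag_connected v)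
    (show x ∈ {y | v ∈ td.bag y} from hvx) hvt
  obtain ⟨u, q, huadj, hnot, hsub⟩ := TD.firstHit p (TD.side_ne td A Cb hx)
  have huside : u ∈ TD.Side td A Cb t := by
    refine TD.side_closed td A Cb hx q.reverse ?_
    rw [SimpleGraph.Walk.support_reverse]
    exact fun h => hnot (List.mem_reverse.mp h)
  have : u = t' := TD.side_unique_nbr td A Cb huadj.symm hadj huside hside
  subst this
  exact hp u (hsub u q.end_mem_support)

/-- If both chosen components are large, the component at `t'` is contained in the
component at `t`. -/
lemma TD.M2 [Fintype V] {t t' : ι} (hadj : td.T.Adj t t') (hside : t' ∈ TD.Side td A Cb t)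
    (hbig : ∀ s : ι, A.ncard < 2 * (Cb s).supp.ncard) :
    TD.U td A Cb t' ⊆ TD.U td A Cb t := by
  -- first, the two components intersect
  have hcardU : ∀ s : ι, (TD.U td A Cb s).ncard = (Cb s).supp.ncard := fun s =>
    Set.ncard_image_of_injective _ Subtype.val_injective
  have hinter : (TD.U td A Cb t' ∩ TD.U td A Cb t).Nonempty := by
    rw [Set.nonempty_iff_ne_empty]
    intro hdisj
    have hdis : Disjoint (TD.U td A Cb t') (TD.U td A Cb t) :=
      Set.disjoint_iff_inter_eq_empty.mpr hdisj
    have hun : (TD.U td A Cb t' ∪ TD.U td A Cb t).ncard =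
        (TD.U td A Cb t').ncard + (TD.U td A Cb t).ncard :=
      Set.ncard_union_eq hdis (Set.toFinite _) (Set.toFinite _)
    have hsubA : TD.U td A Cb t' ∪ TD.U td A Cb t ⊆ A := by
      rintro z (hz | hz)
      · exact (TD.U_sub td A Cb t' hz).1
      · exact (TD.U_sub td A Cb t hz).1
    have hle : (TD.U td A Cb t' ∪ TD.U td A Cb t).ncard ≤ A.ncard :=
      Set.ncard_le_ncard hsubA A.toFinite
    have h1 := hbig t'
    have h2 := hbig t
    rw [← hcardU t'] at h1
    rw [← hcardU t] at h2
    omega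
  -- every vertex adjacent (in the induced graph at t') to the old component stays in it
  have hstep : ∀ {w w₂ : V}, w ∈ TD.U td A Cb t → G.Adj w w₂ → w₂ ∈ A \ td.bag t' →
      w₂ ∈ TD.U td A Cb t := by
    intro w w₂ hw hadj2 hw₂
    by_cases hwt : w₂ ∈ td.bag t
    · exfalso
      obtain ⟨x, hwx, hw₂x⟩ := td.bag_edge w w₂ hadj2
      have hxW : x ∈ TD.W td A Cb t := ⟨w, hw, hwx⟩
      have := TD.M1 td A Cb hadj hside hwt (TD.W_sub_Side td A Cb t hxW) hw₂x
      exact hw₂.2 this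
    · exact TD.U_adj td A Cb hw ⟨hw₂.1, hwt⟩ hadj2
  -- walk induction in the induced graph at t'
  have haux : ∀ {a b : ↥(A \ td.bag t')} (p : (G.induce (A \ td.bag t')).Walk a b),
      (a : V) ∈ TD.U td A Cb t → (b : V) ∈ TD.U td A Cb t := by
    intro a b p
    induction p with
    | nil => exact id
    | @cons a c b h q ih =>
      intro ha
      exact ih (hstep ha h c.2)
  rintro v ⟨v', hv', rfl⟩
  obtain ⟨u, ⟨hu1, hu2⟩⟩ := hinter
  obtain ⟨u', hu', rfl⟩ := hu1
  rw [SimpleGraph.ConnectedComponent.mem_supp_iff] at hu' hv'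
  obtain ⟨p⟩ : (G.induce (A \ td.bag t')).Reachable u' v' :=
    SimpleGraph.ConnectedComponent.exact (hu'.trans hv'.symm)
  exact haux p hu2

/-- The side strictly shrinks when moving from `t` to `t'`. -/
lemma TD.M3 [Fintype V] {t t' : ι} (hadj : td.T.Adj t t') (hside : t' ∈ TD.Side td A Cb t)
    (hbig : ∀ s : ι, A.ncard < 2 * (Cb s).supp.ncard) :
    TD.Side td A Cb t' ⊆ TD.Side td A Cb t := by
  classical
  have hUsub := TD.M2 td A Cb hadj hside hbig
  intro s hs
  obtain ⟨r', hr', p, hp⟩ := hs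
  have hr'W : r' ∈ TD.W td A Cb t := by
    obtain ⟨w, hw, hwr⟩ := hr'
    exact ⟨w, hUsub hw, hwr⟩
  have hpt : t ∉ p.support := by
    intro ht
    -- derive a contradiction: from `t` we can reach `r'` avoiding `t'`
    have hq := p.dropUntil t ht
    have hqsub := p.support_dropUntil_subset ht
    have hqt' : t' ∉ (p.dropUntil t ht).support := fun h => hp (hqsub h)
    -- reverse and find the first neighbor of t
    obtain ⟨u, q2, hu_adj, htnot, hsub2⟩ :=
      TD.firstHit (p.dropUntil t ht).reverse (TD.W_not_t td A Cb hr'W)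
    have hut' : u ≠ t' := by
      intro h
      subst h
      apply hqt'
      have := hsub2 u q2.end_mem_support
      rw [SimpleGraph.Walk.support_reverse] at this
      exact List.mem_reverse.mp this
    have huside : u ∈ TD.Side td A Cb t := by
      refine ⟨r', hr'W, q2.reverse, ?_⟩
      rw [SimpleGraph.Walk.support_reverse]
      exact fun h => htnot (List.mem_reverse.mp h)
    exact hut' (TD.side_unique_nbr td A Cb hu_adj.symm hadj huside hside)
  exact ⟨r', hr'W, p, hpt⟩

end Main

/-- Given a tree decomposition of `G` and a set `A` of vertices, some bag `B_t` is a
`1/2`-balanced separator of `A`: every connected component of `G[A \ B_t]` has at most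
`|A|/2` vertices. -/
theorem stmt2 {V ι : Type*} [Fintype V] [Fintype ι] (G : SimpleGraph V)
    (td : TreeDecomp G ι) (A : Set V) :
    ∃ t : ι, ∀ C : (G.induce (A \ td.bag t)).ConnectedComponent,
      2 * C.supp.ncard ≤ A.ncard := by
  classical
  by_contra hcon
  push_neg at hcon
  choose Cb hCb using hcon
  have hne : Nonempty ι := td.isTree.isConnected.nonempty
  obtain ⟨t, -, hmin⟩ := Finset.exists_min_image Finset.univ
    (fun s => (TD.Side td A Cb s).ncard) ⟨Classical.arbitrary ι, Finset.mem_univ _⟩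
  obtain ⟨t', hadj, hside⟩ := TD.exists_nbr td A Cb t
  have hsub := TD.M3 td A Cb hadj hside hCb
  have hss : TD.Side td A Cb t' ⊂ TD.Side td A Cb t := by
    refine (Set.ssubset_iff_of_subset hsub).mpr ⟨t', hside, ?_⟩
    exact fun h => TD.side_ne td A Cb h rfl
  have hlt : (TD.Side td A Cb t').ncard < (TD.Side td A Cb t).ncard :=
    Set.ncard_lt_ncard hss (Set.toFinite _)
  exact absurd (hmin t' (Finset.mem_univ _)) (not_le.mpr hlt)
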